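/- Let X be a finite set, M a finite abelian group, and U : X × X → M a map with U_{y,x} = −U_{x,y} (an M-assignment, written additively). Let P : X × X → ℝ be a matrix with nonnegative entries and spectral radius strictly less than 1, and define the lifted matrix P̃ indexed by X × M by P̃_{(x,m),(y,n)} = P_{x,y} if n = m + U_{x,y} and 0 otherwise. For each character χ : M → ℂ (a homomorphism into the unit circle), define P^{U,χ}_{x,y} = P_{x,y} χ(U_{x,y}). Then I − P̃ and each I − P^{U,χ} are invertible, and for all x, y ∈ X and m, n ∈ M: (I − P̃)^{-1}_{(x,m),(y,n)} = (1/|M|) Σ_{χ ∈ \hat{M}} \overline{χ(n − m)} · (I − P^{U,χ})^{-1}_{x,y}, where the sum is over all characters of M. -/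

import Mathlib

open scoped BigOperators

set_option linter.unusedSectionVars false

section SpectralAux

variable {X : Type*} [Fintype X] [DecidableEq X]

attribute [local instance] Matrix.linftyOpNormedRing Matrix.linftyOpNormedAlgebra

noncomputable local instance : CompleteSpace (Matrix X X ℂ) :=
  FiniteDimensional.complete ℂ _

/-- If a complex matrix is entrywise dominated in norm by a nonnegative real matrix with
spectral radius `< 1`, then `1 - A` is invertible. -/
theorem aux_isUnit_one_sub (P : Matrix X X ℝ) (hnn : ∀ x y, 0 ≤ P x y)
    (hspec : ∀ μ ∈ spectrum ℂ (P.map Complex.ofReal), ‖μ‖ < 1)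
    (A : Matrix X X ℂ) (hA : ∀ x y, ‖A x y‖ ≤ P x y) :
    IsUnit (1 - A) := by
  classical
  have hPk : ∀ k : ℕ, ∀ x y, 0 ≤ (P ^ k) x y := by
    intro k
    induction k with
    | zero => intro x y; by_cases h : x = y <;> simp [Matrix.one_apply, h]
    | succ k ih =>
      intro x y
      rw [pow_succ, Matrix.mul_apply]
      exact Finset.sum_nonneg fun z _ => mul_nonneg (ih x z) (hnn z y)
  have hpow : ∀ k : ℕ, ∀ x y, ‖(A ^ k) x y‖ ≤ (P ^ k) x y := by
    intro k
    induction k with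
    | zero =>
      intro x y; by_cases h : x = y <;> simp [Matrix.one_apply, h]
    | succ k ih =>
      intro x y
      rw [pow_succ, pow_succ, Matrix.mul_apply, Matrix.mul_apply]
      refine (norm_sum_le _ _).trans (Finset.sum_le_sum fun z _ => ?_)
      rw [norm_mul]
      exact mul_le_mul (ih x z) (hA z y) (norm_nonneg _) (hPk k x z)
  have hmapk : ∀ k : ℕ, (P.map Complex.ofReal) ^ k = (P ^ k).map Complex.ofReal := by
    intro k
    have := map_pow ((RingHom.mapMatrix Complex.ofRealHom : Matrix X X ℝ →+* Matrix X X ℂ)) P k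
    exact this.symm
  have hnorm : ∀ k : ℕ, ‖A ^ k‖₊ ≤ ‖(P.map Complex.ofReal) ^ k‖₊ := by
    intro k
    rw [hmapk, Matrix.linfty_opNNNorm_def, Matrix.linfty_opNNNorm_def]
    refine Finset.sup_mono_fun fun x _ => Finset.sum_le_sum fun y _ => ?_
    rw [← NNReal.coe_le_coe]
    simp only [coe_nnnorm, Matrix.map_apply, Complex.norm_real]
    calc ‖(A ^ k) x y‖ ≤ (P ^ k) x y := hpow k x y
      _ ≤ ‖(P ^ k) x y‖ := le_abs_self _
  have hρ : spectralRadius ℂ A ≤ spectralRadius ℂ (P.map Complex.ofReal) := by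
    refine le_of_tendsto_of_tendsto'
      (spectrum.pow_nnnorm_pow_one_div_tendsto_nhds_spectralRadius A)
      (spectrum.pow_nnnorm_pow_one_div_tendsto_nhds_spectralRadius (P.map Complex.ofReal))
      fun n => ?_
    exact ENNReal.rpow_le_rpow (by exact_mod_cast hnorm n) (by positivity)
  have hρP : spectralRadius ℂ (P.map Complex.ofReal) < 1 := by
    set S := (Matrix.finite_spectrum (P.map Complex.ofReal)).toFinset with hS
    set c : NNReal := S.sup fun μ => ‖μ‖₊ with hc
    have hle : spectralRadius ℂ (P.map Complex.ofReal) ≤ (c : ENNReal) := by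
      refine iSup₂_le fun μ hμ => ?_
      exact_mod_cast ENNReal.coe_le_coe.mpr (Finset.le_sup (by simpa [hS] using hμ))
    have hclt : c < 1 := by
      rw [hc]
      refine Finset.sup_lt_iff (by norm_num) |>.mpr fun μ hμ => ?_
      have := hspec μ (by simpa [hS] using hμ)
      exact_mod_cast this
    calc spectralRadius ℂ (P.map Complex.ofReal) ≤ (c : ENNReal) := hle
      _ < 1 := by exact_mod_cast hclt
  by_contra h
  have hmem : (1 : ℂ) ∈ spectrum ℂ A := by
    rw [spectrum.mem_iff]
    simpa using h
  have h1 : (1 : ENNReal) ≤ spectralRadius ℂ A := by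
    have := le_iSup₂_of_le (f := fun (k : ℂ) (_ : k ∈ spectrum ℂ A) => (‖k‖₊ : ENNReal))
      (1 : ℂ) hmem le_rfl
    simpa [spectralRadius] using this
  exact absurd ((h1.trans hρ).trans_lt hρP) (by simp)

end SpectralAux

section LiftAux

variable {X : Type*} [Fintype X] [DecidableEq X]
variable {M : Type*} [AddCommGroup M] [Fintype M] [DecidableEq M]

/-- The "Fourier mode" lift of a matrix on `X` to a matrix on `X × M`. -/
noncomputable def charLift (χ : AddChar M ℂ) (B : Matrix X X ℂ) :
    Matrix (X × M) (X × M) ℂ :=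
  Matrix.of fun p q => (starRingEnd ℂ) (χ (q.2 - p.2)) * B p.1 q.1

theorem charLift_sub (χ : AddChar M ℂ) (B C : Matrix X X ℂ) :
    charLift χ (B - C) = charLift χ B - charLift χ C := by
  ext p q
  simp [charLift, Matrix.sub_apply, mul_sub]

theorem charLift_mul (U : X → X → M) (P : Matrix X X ℝ) (χ : AddChar M ℂ) (B : Matrix X X ℂ) :
    (Matrix.of (fun p q : X × M =>
        if q.2 = p.2 + U p.1 q.1 then P p.1 q.1 else 0)).map Complex.ofReal * charLift χ B
      = charLift χ ((Matrix.of fun x y : X => (P x y : ℂ) * χ (U x y)) * B) := by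
  ext ⟨x, m⟩ ⟨y, n⟩
  simp only [charLift, Matrix.mul_apply, Matrix.of_apply, Matrix.map_apply,
    Fintype.sum_prod_type, apply_ite Complex.ofReal, Complex.ofReal_zero, ite_mul, zero_mul,
    Finset.sum_ite_eq', Finset.mem_univ, if_true, Finset.mul_sum, Finset.sum_mul]
  refine Finset.sum_congr rfl fun z _ => ?_
  have hadd : n - (m + U x z) = (n - m) + -(U x z) := by abel
  rw [hadd, AddChar.map_add_eq_mul, AddChar.map_neg_eq_conj, map_mul, Complex.conj_conj]
  ring

theorem charLift_sum_one :
    ∑ χ : AddChar M ℂ, charLift χ (1 : Matrix X X ℂ)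
      = (Fintype.card M : ℂ) • (1 : Matrix (X × M) (X × M) ℂ) := by
  ext ⟨x, m⟩ ⟨y, n⟩
  have hconj : ∀ χ : AddChar M ℂ, (starRingEnd ℂ) (χ (n - m)) = χ (m - n) := by
    intro χ
    rw [← AddChar.map_neg_eq_conj, neg_sub]
  simp only [Matrix.sum_apply, charLift, Matrix.of_apply, Matrix.one_apply, Matrix.smul_apply,
    hconj, mul_ite, mul_one, mul_zero, Prod.mk.injEq]
  by_cases hxy : x = y
  · by_cases hmn : m = n
    · simp [hxy, hmn, AddChar.sum_apply_eq_ite]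
    · have : m - n ≠ 0 := sub_ne_zero.mpr hmn
      simp [hxy, hmn, AddChar.sum_apply_eq_ite, this]
  · simp [hxy]

end LiftAux

/-- Fourier decomposition of the Green function of an abelian Galois covering:
`(I - P̃)⁻¹_{(x,m),(y,n)} = |M|⁻¹ Σ_χ χ(n-m)̄ (I - P^{U,χ})⁻¹_{x,y}`,
where the sum runs over the characters of the finite abelian group `M`. -/
theorem abelian_covering_green_function_fourier
    {X : Type*} [Fintype X] [DecidableEq X]
    {M : Type*} [AddCommGroup M] [Fintype M] [DecidableEq M]
    (U : X → X → M) (hU : ∀ x y, U y x = -(U x y))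
    (P : Matrix X X ℝ) (hnn : ∀ x y, 0 ≤ P x y)
    (hspec : ∀ μ ∈ spectrum ℂ (P.map Complex.ofReal), ‖μ‖ < 1) :
    IsUnit (1 - Matrix.of (fun p q : X × M =>
        if q.2 = p.2 + U p.1 q.1 then P p.1 q.1 else 0)) ∧
    (∀ χ : AddChar M ℂ,
      IsUnit (1 - Matrix.of (fun x y : X => (P x y : ℂ) * χ (U x y)))) ∧
    ∀ (x y : X) (m n : M),
      (((1 - Matrix.of (fun p q : X × M =>
            if q.2 = p.2 + U p.1 q.1 then P p.1 q.1 else 0))⁻¹ (x, m) (y, n) : ℝ) : ℂ)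
        = (Fintype.card M : ℂ)⁻¹ * ∑ χ : AddChar M ℂ,
            (starRingEnd ℂ) (χ (n - m)) *
              (1 - Matrix.of (fun x y : X => (P x y : ℂ) * χ (U x y)))⁻¹ x y := by
  classical
  set Pt : Matrix (X × M) (X × M) ℝ :=
    Matrix.of (fun p q : X × M => if q.2 = p.2 + U p.1 q.1 then P p.1 q.1 else 0) with hPt
  set Q : AddChar M ℂ → Matrix X X ℂ :=
    fun χ => Matrix.of (fun x y : X => (P x y : ℂ) * χ (U x y)) with hQ
  -- invertibility of the twisted matrices
  have hQunit : ∀ χ : AddChar M ℂ, IsUnit (1 - Q χ) := by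
    intro χ
    refine aux_isUnit_one_sub P hnn hspec (Q χ) fun x y => ?_
    rw [hQ]
    simp only [Matrix.of_apply, norm_mul, Complex.norm_real, AddChar.norm_apply, mul_one,
      Real.norm_eq_abs, abs_of_nonneg (hnn x y)]
    exact le_rfl
  have hRinv : ∀ χ : AddChar M ℂ, (1 - Q χ) * (1 - Q χ)⁻¹ = 1 := fun χ =>
    Matrix.mul_nonsing_inv _ ((Matrix.isUnit_iff_isUnit_det _).mp (hQunit χ))
  -- the candidate Green function
  set G : Matrix (X × M) (X × M) ℂ :=
    (Fintype.card M : ℂ)⁻¹ • ∑ χ : AddChar M ℂ, charLift χ ((1 - Q χ)⁻¹) with hGdef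
  have hcard : (Fintype.card M : ℂ) ≠ 0 := by
    exact_mod_cast Fintype.card_ne_zero
  -- the key algebraic identity
  have hkey : (1 - Pt.map Complex.ofReal) * G = 1 := by
    rw [sub_mul, one_mul, hGdef, Matrix.mul_smul, Finset.mul_sum]
    have hterm : ∀ χ : AddChar M ℂ,
        Pt.map Complex.ofReal * charLift χ ((1 - Q χ)⁻¹)
          = charLift χ (Q χ * (1 - Q χ)⁻¹) := fun χ => charLift_mul U P χ _
    rw [Finset.sum_congr rfl fun χ _ => hterm χ, ← smul_sub, ← Finset.sum_sub_distrib]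
    have : ∀ χ : AddChar M ℂ,
        charLift χ ((1 - Q χ)⁻¹) - charLift χ (Q χ * (1 - Q χ)⁻¹)
          = charLift χ (1 : Matrix X X ℂ) := by
      intro χ
      rw [← charLift_sub]
      have h2 : (1 - Q χ)⁻¹ - Q χ * (1 - Q χ)⁻¹ = 1 := by
        calc (1 - Q χ)⁻¹ - Q χ * (1 - Q χ)⁻¹ = (1 - Q χ) * (1 - Q χ)⁻¹ := by
              rw [sub_mul, one_mul]
          _ = 1 := hRinv χ
      rw [h2]
    rw [Finset.sum_congr rfl fun χ _ => this χ, charLift_sum_one, smul_smul,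
      inv_mul_cancel₀ hcard, one_smul]
  -- invertibility over ℂ and over ℝ
  have hPtcUnit : IsUnit (1 - Pt.map Complex.ofReal) := by
    have := congrArg Matrix.det hkey
    rw [Matrix.det_mul, Matrix.det_one] at this
    exact (Matrix.isUnit_iff_isUnit_det _).mpr (IsUnit.of_mul_eq_one _ this)
  have hmapsub : (1 - Pt).map Complex.ofReal = 1 - Pt.map Complex.ofReal := by
    ext p q
    by_cases h : p = q <;>
      simp [Matrix.map_apply, Matrix.sub_apply, Matrix.one_apply, h]
  have hdetC : ((1 - Pt).det : ℂ) = (1 - Pt.map Complex.ofReal).det := by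
    rw [← hmapsub]
    exact RingHom.map_det Complex.ofRealHom _
  have hPtUnit : IsUnit (1 - Pt) := by
    rw [Matrix.isUnit_iff_isUnit_det, isUnit_iff_ne_zero]
    intro h0
    have hC : (1 - Pt.map Complex.ofReal).det = 0 := by
      rw [← hdetC, h0, Complex.ofReal_zero]
    exact ((Matrix.isUnit_iff_isUnit_det _).mp hPtcUnit).ne_zero hC
  refine ⟨hPtUnit, hQunit, fun x y m n => ?_⟩
  have h1 : (1 - Pt) * (1 - Pt)⁻¹ = 1 :=
    Matrix.mul_nonsing_inv _ ((Matrix.isUnit_iff_isUnit_det _).mp hPtUnit)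
  have h2 : (1 - Pt.map Complex.ofReal) * ((1 - Pt)⁻¹.map Complex.ofReal) = 1 := by
    have hm := congrArg (fun A : Matrix (X × M) (X × M) ℝ => A.map Complex.ofReal) h1
    have hmm : ((1 - Pt) * (1 - Pt)⁻¹).map Complex.ofReal
        = ((1 - Pt).map Complex.ofReal) * ((1 - Pt)⁻¹.map Complex.ofReal) :=
      Matrix.map_mul (f := Complex.ofRealHom)
    rw [hmm, hmapsub] at hm
    simpa using hm
  have hinv1 : (1 - Pt.map Complex.ofReal)⁻¹ = (1 - Pt)⁻¹.map Complex.ofReal :=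
    Matrix.inv_eq_right_inv h2
  have hinv2 : (1 - Pt.map Complex.ofReal)⁻¹ = G := Matrix.inv_eq_right_inv hkey
  have hGeq : (1 - Pt)⁻¹.map Complex.ofReal = G := by rw [← hinv1, hinv2]
  have hentry := congrFun (congrFun hGeq (x, m)) (y, n)
  simp only [Matrix.map_apply] at hentry
  rw [hentry, hGdef]
  simp [charLift, Matrix.smul_apply, Matrix.sum_apply, Finset.mul_sum, smul_eq_mul, hQ]
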